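/- Let f, g : [0,1] → [0,1] be continuous open maps with f(0) = g(0) = 0, and suppose f and g have the same finite degree n (i.e., n is minimal such that [0,1] can be partitioned by points 0 = i_0 < i_1 < ⋯ < i_n = 1 into n subintervals on each of which the map is monotone, for both f and g). Then there exists an orientation-preserving homeomorphism h of [0,1] such that f = g ∘ h. -/

import Mathlib

open unitInterval

noncomputable section

/-- `f` admits a partition `0 = u 0 < u 1 < ⋯ < u k = 1` of `[0,1]` into `k` subintervals
on each of which `f` is monotone (nondecreasing or nonincreasing).  The degree of a
continuous open map `f : [0,1] → [0,1]` is the least such `k`. -/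
def DegWitness (f : I → I) (k : ℕ) : Prop :=
  ∃ u : Fin (k + 1) → I, StrictMono u ∧ u 0 = 0 ∧ u (Fin.last k) = 1 ∧
    ∀ j : Fin k, MonotoneOn f (Set.Icc (u j.castSucc) (u j.succ)) ∨
      AntitoneOn f (Set.Icc (u j.castSucc) (u j.succ))

section helpers


lemma coe_image_Icc (a b : I) (hab : a ≤ b) :
    Subtype.val '' (Set.Icc a b) = Set.Icc (a : ℝ) (b : ℝ) := by
  ext x
  constructor
  · rintro ⟨y, ⟨h1, h2⟩, rfl⟩
    exact ⟨h1, h2⟩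
  · rintro ⟨h1, h2⟩
    have hx : x ∈ I := ⟨le_trans a.2.1 h1, le_trans h2 b.2.2⟩
    exact ⟨⟨x, hx⟩, ⟨h1, h2⟩, rfl⟩

lemma isPreconnected_Icc_I (a b : I) : IsPreconnected (Set.Icc a b) := by
  rcases le_or_gt a b with hab | hab
  · rw [← Topology.IsInducing.isPreconnected_image Topology.IsInducing.subtypeVal,
      coe_image_Icc a b hab]
    exact isPreconnected_Icc
  · rw [Set.Icc_eq_empty (not_le.2 hab)]
    exact isPreconnected_empty

variable {f : I → I}

lemma not_constOn (hfo : IsOpenMap f) {a b : I} (hab : a < b)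
    (hc : ∀ x ∈ Set.Icc a b, f x = f a) : False := by
  obtain ⟨c, hc1, hc2⟩ := exists_between hab
  have hopen : IsOpen (f '' Set.Ioo a b) := hfo _ isOpen_Ioo
  have himg : f '' Set.Ioo a b = {f a} := by
    apply Set.eq_singleton_iff_nonempty_unique_mem.2
    refine ⟨⟨f c, ⟨c, ⟨hc1, hc2⟩, rfl⟩⟩, ?_⟩
    rintro y ⟨x, hx, rfl⟩
    exact hc x ⟨hx.1.le, hx.2.le⟩
  rw [himg] at hopen
  rcases isClopen_iff.1 ⟨isClosed_singleton, hopen⟩ with h | h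
  · exact (Set.singleton_nonempty _).ne_empty h
  · have h0 : (0 : I) ∈ ({f a} : Set I) := h ▸ Set.mem_univ _
    have h1 : (1 : I) ∈ ({f a} : Set I) := h ▸ Set.mem_univ _
    rw [Set.mem_singleton_iff] at h0 h1
    have : ((0 : I) : ℝ) = ((1 : I) : ℝ) := by rw [h0, ← h1]
    norm_num at this

lemma strictify_mono (hfo : IsOpenMap f) {a b : I}
    (hm : MonotoneOn f (Set.Icc a b)) : StrictMonoOn f (Set.Icc a b) := by
  intro x hx y hy hxy
  rcases lt_or_eq_of_le (hm hx hy hxy.le) with h | h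
  · exact h
  · exfalso
    apply not_constOn hfo hxy
    intro z hz
    have hz' : z ∈ Set.Icc a b := ⟨le_trans hx.1 hz.1, le_trans hz.2 hy.2⟩
    exact le_antisymm (h ▸ hm hz' hy hz.2) (hm hx hz' hz.1)

lemma strictify_anti (hfo : IsOpenMap f) {a b : I}
    (hm : AntitoneOn f (Set.Icc a b)) : StrictAntiOn f (Set.Icc a b) := by
  intro x hx y hy hxy
  rcases lt_or_eq_of_le (hm hx hy hxy.le) with h | h
  · exact h
  · exfalso
    apply not_constOn hfo hxy
    intro z hz
    have hz' : z ∈ Set.Icc a b := ⟨le_trans hx.1 hz.1, le_trans hz.2 hy.2⟩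
    exact le_antisymm (hm hx hz' hz.1) (h ▸ hm hz' hy hz.2)

lemma localmax (hfo : IsOpenMap f) {x : I} {s : Set I} (hs : s ∈ nhds x)
    (hmax : ∀ y ∈ s, f y ≤ f x) : f x = 1 := by
  by_contra hne
  have hlt : f x < 1 := lt_of_le_of_ne le_one' hne
  have hx : x ∈ interior s := mem_interior_iff_mem_nhds.2 hs
  have hopen : IsOpen (f '' interior s) := hfo _ isOpen_interior
  have hmem : f x ∈ f '' interior s := ⟨x, hx, rfl⟩
  obtain ⟨u, hu1, hu2⟩ := exists_Ico_subset_of_mem_nhds (hopen.mem_nhds hmem) ⟨1, hlt⟩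
  obtain ⟨t, ht1, ht2⟩ := exists_between hu1
  obtain ⟨y, hy, hyt⟩ := hu2 ⟨ht1.le, ht2⟩
  exact absurd (hyt ▸ hmax y (interior_subset hy)) (not_le.2 ht1)

lemma localmin (hfo : IsOpenMap f) {x : I} {s : Set I} (hs : s ∈ nhds x)
    (hmin : ∀ y ∈ s, f x ≤ f y) : f x = 0 := by
  by_contra hne
  have hlt : 0 < f x := lt_of_le_of_ne nonneg' (Ne.symm hne)
  have hx : x ∈ interior s := mem_interior_iff_mem_nhds.2 hs
  have hopen : IsOpen (f '' interior s) := hfo _ isOpen_interior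
  have hmem : f x ∈ f '' interior s := ⟨x, hx, rfl⟩
  obtain ⟨u, hu1, hu2⟩ := exists_Ioc_subset_of_mem_nhds (hopen.mem_nhds hmem) ⟨0, hlt⟩
  obtain ⟨t, ht1, ht2⟩ := exists_between hu1
  obtain ⟨y, hy, hyt⟩ := hu2 ⟨ht1, ht2.le⟩
  exact absurd (hyt ▸ hmin y (interior_subset hy)) (not_le.2 ht2)

lemma monotoneOn_union {a b c : I} (hab : a ≤ b) (hbc : b ≤ c)
    (h1 : MonotoneOn f (Set.Icc a b)) (h2 : MonotoneOn f (Set.Icc b c)) :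
    MonotoneOn f (Set.Icc a c) := by
  intro x hx y hy hxy
  rcases le_total y b with h | h
  · exact h1 ⟨hx.1, le_trans hxy h⟩ ⟨hy.1, h⟩ hxy
  rcases le_total x b with h' | h'
  · calc f x ≤ f b := h1 ⟨hx.1, h'⟩ ⟨hab, le_refl b⟩ h'
      _ ≤ f y := h2 ⟨le_refl b, hbc⟩ ⟨h, hy.2⟩ h
  · exact h2 ⟨h', hx.2⟩ ⟨h, hy.2⟩ hxy

lemma antitoneOn_union {a b c : I} (hab : a ≤ b) (hbc : b ≤ c)
    (h1 : AntitoneOn f (Set.Icc a b)) (h2 : AntitoneOn f (Set.Icc b c)) :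
    AntitoneOn f (Set.Icc a c) := by
  intro x hx y hy hxy
  rcases le_total y b with h | h
  · exact h1 ⟨hx.1, le_trans hxy h⟩ ⟨hy.1, h⟩ hxy
  rcases le_total x b with h' | h'
  · calc f y ≤ f b := h2 ⟨le_refl b, hbc⟩ ⟨h, hy.2⟩ h
      _ ≤ f x := h1 ⟨hx.1, h'⟩ ⟨hab, le_refl b⟩ h'
  · exact h2 ⟨h', hx.2⟩ ⟨h, hy.2⟩ hxy


lemma merge_witness {f : I → I} {m : ℕ} (u : Fin (m + 2) → I)
    (hu : StrictMono u) (h0 : u 0 = 0) (h1 : u (Fin.last (m + 1)) = 1)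
    (j : ℕ) (hj : j < m)
    (hp : ∀ k, (hk : k < m + 1) → k ≠ j →
      MonotoneOn f (Set.Icc (u ⟨k, by omega⟩) (u ⟨k + 1, by omega⟩)) ∨
      AntitoneOn f (Set.Icc (u ⟨k, by omega⟩) (u ⟨k + 1, by omega⟩)))
    (hmerge : MonotoneOn f (Set.Icc (u ⟨j, by omega⟩) (u ⟨j + 2, by omega⟩)) ∨
      AntitoneOn f (Set.Icc (u ⟨j, by omega⟩) (u ⟨j + 2, by omega⟩))) :
    DegWitness f m := by
  refine ⟨fun i => if (i : ℕ) ≤ j then u ⟨i, by omega⟩ else u ⟨(i : ℕ) + 1, by omega⟩,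
    ?_, ?_, ?_, ?_⟩
  · intro a b hab
    have hab' : (a : ℕ) < b := hab
    dsimp only
    split_ifs with ha hb hb
    · exact hu (Fin.mk_lt_mk.2 (by omega))
    · exact hu (Fin.mk_lt_mk.2 (by omega))
    · exact absurd (le_trans (Nat.le_of_lt hab') hb) ha
    · exact hu (Fin.mk_lt_mk.2 (by omega))
  · have hc : ((0 : Fin (m + 1)) : ℕ) ≤ j := by simp
    simp only [hc, if_pos]
    have h00 : (⟨((0 : Fin (m + 1)) : ℕ), by omega⟩ : Fin (m + 2)) = 0 := by
      apply Fin.ext; simp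
    rw [h00, h0]
  · have hnle : ¬ ((Fin.last m : ℕ) ≤ j) := by simp only [Fin.val_last]; omega
    simp only [hnle, if_neg, not_false_iff]
    have hlast : (⟨((Fin.last m : ℕ)) + 1, by omega⟩ : Fin (m + 2)) = Fin.last (m + 1) := by
      apply Fin.ext; simp
    rw [hlast, h1]
  · intro i
    have hci : ((i.castSucc : Fin (m + 1)) : ℕ) = (i : ℕ) := rfl
    have hsi : ((i.succ : Fin (m + 1)) : ℕ) = (i : ℕ) + 1 := rfl
    dsimp only
    rcases lt_trichotomy (i : ℕ) j with h | h | h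
    · rw [if_pos (by omega), if_pos (by omega)]
      have e1 : u (⟨((i.castSucc : Fin (m + 1)) : ℕ), by omega⟩ : Fin (m + 2)) =
          u ⟨(i : ℕ), by omega⟩ := congrArg u (Fin.mk_eq_mk.mpr (by omega))
      have e2 : u (⟨((i.succ : Fin (m + 1)) : ℕ), by omega⟩ : Fin (m + 2)) =
          u ⟨(i : ℕ) + 1, by omega⟩ := congrArg u (Fin.mk_eq_mk.mpr (by omega))
      rw [e1, e2]
      exact hp i (by omega) (by omega)
    · rw [if_pos (by omega), if_neg (by omega)]
      have e1 : u (⟨((i.castSucc : Fin (m + 1)) : ℕ), by omega⟩ : Fin (m + 2)) =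
          u ⟨j, by omega⟩ := congrArg u (Fin.mk_eq_mk.mpr (by omega))
      have e2 : u (⟨((i.succ : Fin (m + 1)) : ℕ) + 1, by omega⟩ : Fin (m + 2)) =
          u ⟨j + 2, by omega⟩ := congrArg u (Fin.mk_eq_mk.mpr (by omega))
      rw [e1, e2]
      exact hmerge
    · rw [if_neg (by omega), if_neg (by omega)]
      have e1 : u (⟨((i.castSucc : Fin (m + 1)) : ℕ) + 1, by omega⟩ : Fin (m + 2)) =
          u ⟨(i : ℕ) + 1, by omega⟩ := congrArg u (Fin.mk_eq_mk.mpr (by omega))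
      have e2 : u (⟨((i.succ : Fin (m + 1)) : ℕ) + 1, by omega⟩ : Fin (m + 2)) =
          u ⟨(i : ℕ) + 1 + 1, by omega⟩ := congrArg u (Fin.mk_eq_mk.mpr (by omega))
      rw [e1, e2]
      exact hp ((i : ℕ) + 1) (by omega) (by omega)

lemma canonical (f : I → I) (hfo : IsOpenMap f) (hf0 : f 0 = 0)
    (n : ℕ) (hn : IsLeast {k : ℕ | DegWitness f k} n) :
    ∃ u : Fin (n + 1) → I, StrictMono u ∧ u 0 = 0 ∧ u (Fin.last n) = 1 ∧
      (∀ k : Fin (n + 1), f (u k) = if Even (k : ℕ) then 0 else 1) ∧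
      (∀ j : Fin n, (Even (j : ℕ) → StrictMonoOn f (Set.Icc (u j.castSucc) (u j.succ))) ∧
        (¬ Even (j : ℕ) → StrictAntiOn f (Set.Icc (u j.castSucc) (u j.succ)))) := by
  obtain ⟨u, hu, h0, h1, hp⟩ := hn.1
  obtain ⟨m, rfl⟩ : ∃ m, n = m + 1 := by
    rcases Nat.eq_zero_or_pos n with h | h
    · exfalso
      subst h
      have h01 : (0 : I) = 1 := by
        rw [← h0, ← h1]
        exact congrArg u (Fin.ext (by simp))
      have : ((0 : I) : ℝ) = ((1 : I) : ℝ) := congrArg _ h01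
      norm_num at this
    · exact ⟨n - 1, by omega⟩
  have hpnat : ∀ k, (hk : k < m + 1) →
      MonotoneOn f (Set.Icc (u ⟨k, by omega⟩) (u ⟨k + 1, by omega⟩)) ∨
      AntitoneOn f (Set.Icc (u ⟨k, by omega⟩) (u ⟨k + 1, by omega⟩)) := by
    intro k hk
    exact hp ⟨k, hk⟩
  have hstrict : ∀ k, (hk : k < m + 1) →
      StrictMonoOn f (Set.Icc (u ⟨k, by omega⟩) (u ⟨k + 1, by omega⟩)) ∨
      StrictAntiOn f (Set.Icc (u ⟨k, by omega⟩) (u ⟨k + 1, by omega⟩)) :=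
    fun k hk => (hpnat k hk).imp (strictify_mono hfo) (strictify_anti hfo)
  have hltk : ∀ k, (hk : k + 1 < m + 2) → u ⟨k, by omega⟩ < u ⟨k + 1, hk⟩ :=
    fun k hk => hu (Fin.mk_lt_mk.2 (by omega))
  have hnotMM : ∀ k, (hk : k + 1 < m + 1) →
      MonotoneOn f (Set.Icc (u ⟨k, by omega⟩) (u ⟨k + 1, by omega⟩)) →
      MonotoneOn f (Set.Icc (u ⟨k + 1, by omega⟩) (u ⟨k + 2, by omega⟩)) → False := by
    intro k hk hm1 hm2
    have hmerge := monotoneOn_union (hltk k (by omega)).le (hltk (k + 1) (by omega)).le hm1 hm2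
    have hw : DegWitness f m := merge_witness u hu h0 h1 k (by omega)
      (fun k' hk' _ => hpnat k' hk') (Or.inl hmerge)
    exact absurd (hn.2 hw) (by omega)
  have hnotAA : ∀ k, (hk : k + 1 < m + 1) →
      AntitoneOn f (Set.Icc (u ⟨k, by omega⟩) (u ⟨k + 1, by omega⟩)) →
      AntitoneOn f (Set.Icc (u ⟨k + 1, by omega⟩) (u ⟨k + 2, by omega⟩)) → False := by
    intro k hk hm1 hm2
    have hmerge := antitoneOn_union (hltk k (by omega)).le (hltk (k + 1) (by omega)).le hm1 hm2
    have hw : DegWitness f m := merge_witness u hu h0 h1 k (by omega)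
      (fun k' hk' _ => hpnat k' hk') (Or.inr hmerge)
    exact absurd (hn.2 hw) (by omega)
  have hdir : ∀ k, (hk : k < m + 1) →
      (Even k → StrictMonoOn f (Set.Icc (u ⟨k, by omega⟩) (u ⟨k + 1, by omega⟩))) ∧
      (¬ Even k → StrictAntiOn f (Set.Icc (u ⟨k, by omega⟩) (u ⟨k + 1, by omega⟩))) := by
    intro k
    induction k with
    | zero =>
      intro hk
      rcases hstrict 0 hk with hM | hA
      · exact ⟨fun _ => hM, fun h => absurd Even.zero h⟩
      · exfalso
        have hlt01 := hltk 0 (by omega)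
        have hlt := hA ⟨le_refl _, hlt01.le⟩ ⟨hlt01.le, le_refl _⟩ hlt01
        have h00 : u (⟨0, by omega⟩ : Fin (m + 2)) = 0 := by
          rw [show (⟨0, by omega⟩ : Fin (m + 2)) = 0 from Fin.ext (by simp)]
          exact h0
        rw [h00, hf0] at hlt
        exact absurd hlt (not_lt.2 nonneg')
    | succ k ih =>
      intro hk
      have hk' : k < m + 1 := by omega
      obtain ⟨ihM, ihA⟩ := ih hk'
      rcases hstrict (k + 1) hk with hM | hA
      · refine ⟨fun _ => hM, fun hodd => ?_⟩
        exfalso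
        have hkeven : Even k := by rw [Nat.even_add_one] at hodd; exact not_not.1 hodd
        exact hnotMM k (by omega) ((ihM hkeven).monotoneOn) hM.monotoneOn
      · refine ⟨fun heven => ?_, fun _ => hA⟩
        exfalso
        have hkodd : ¬ Even k := by rw [Nat.even_add_one] at heven; exact heven
        exact hnotAA k (by omega) ((ihA hkodd).antitoneOn) hA.antitoneOn
  have hval : ∀ k, (hk : k < m + 2) → f (u ⟨k, hk⟩) = if Even k then 0 else 1 := by
    intro k
    induction k with
    | zero =>
      intro hk
      rw [show (⟨0, hk⟩ : Fin (m + 2)) = 0 from Fin.ext (by simp), h0, hf0]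
      simp
    | succ k ih =>
      intro hk
      by_cases hkm : k + 1 < m + 1
      · rcases Nat.even_or_odd k with he | hoo
        · have hM := (hdir k (by omega)).1 he
          have hA := (hdir (k + 1) hkm).2 (by rw [Nat.even_add_one]; exact not_not_intro he)
          have hmax : f (u ⟨k + 1, hk⟩) = 1 := by
            apply localmax hfo (s := Set.Ioo (u ⟨k, by omega⟩) (u ⟨k + 2, by omega⟩))
            · exact Ioo_mem_nhds (hltk k (by omega)) (hltk (k + 1) (by omega))
            · intro y hy
              rcases le_total y (u ⟨k + 1, hk⟩) with h | h
              · exact hM.monotoneOn ⟨hy.1.le, h⟩ ⟨(hltk k (by omega)).le, le_refl _⟩ h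
              · exact hA.antitoneOn ⟨le_refl _, (hltk (k + 1) (by omega)).le⟩ ⟨h, hy.2.le⟩ h
          rw [hmax]
          simp [Nat.even_add_one, he]
        · have hko : ¬ Even k := by rw [Nat.even_iff]; have := Nat.odd_iff.mp hoo; omega
          have hA := (hdir k (by omega)).2 hko
          have hM := (hdir (k + 1) hkm).1 (by rw [Nat.even_add_one]; exact hko)
          have hmin : f (u ⟨k + 1, hk⟩) = 0 := by
            apply localmin hfo (s := Set.Ioo (u ⟨k, by omega⟩) (u ⟨k + 2, by omega⟩))
            · exact Ioo_mem_nhds (hltk k (by omega)) (hltk (k + 1) (by omega))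
            · intro y hy
              rcases le_total y (u ⟨k + 1, hk⟩) with h | h
              · exact hA.antitoneOn ⟨hy.1.le, h⟩ ⟨(hltk k (by omega)).le, le_refl _⟩ h
              · exact hM.monotoneOn ⟨le_refl _, (hltk (k + 1) (by omega)).le⟩ ⟨h, hy.2.le⟩ h
          rw [hmin]
          simp [Nat.even_add_one, hko]
      · have hlast : (⟨k + 1, hk⟩ : Fin (m + 2)) = Fin.last (m + 1) :=
          Fin.ext (by simp [Fin.val_last]; omega)
        rcases Nat.even_or_odd k with he | hoo
        · have hM := (hdir k (by omega)).1 he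
          have hmax : f (u ⟨k + 1, hk⟩) = 1 := by
            apply localmax hfo (s := Set.Ioi (u ⟨k, by omega⟩))
            · exact Ioi_mem_nhds (hltk k (by omega))
            · intro y hy
              have hy2 : y ≤ u ⟨k + 1, hk⟩ := by rw [hlast, h1]; exact le_one'
              exact hM.monotoneOn ⟨hy.le, hy2⟩ ⟨(hltk k (by omega)).le, le_refl _⟩ hy2
          rw [hmax]
          simp [Nat.even_add_one, he]
        · have hko : ¬ Even k := by rw [Nat.even_iff]; have := Nat.odd_iff.mp hoo; omega
          have hA := (hdir k (by omega)).2 hko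
          have hmin : f (u ⟨k + 1, hk⟩) = 0 := by
            apply localmin hfo (s := Set.Ioi (u ⟨k, by omega⟩))
            · exact Ioi_mem_nhds (hltk k (by omega))
            · intro y hy
              have hy2 : y ≤ u ⟨k + 1, hk⟩ := by rw [hlast, h1]; exact le_one'
              exact hA.antitoneOn ⟨hy.le, hy2⟩ ⟨(hltk k (by omega)).le, le_refl _⟩ hy2
          rw [hmin]
          simp [Nat.even_add_one, hko]
  exact ⟨u, hu, h0, h1, fun k => hval k.1 k.2, fun j => hdir j.1 j.2⟩

end helpers

/-- If `f, g : [0,1] → [0,1]` are continuous open maps with `f 0 = g 0 = 0` of the same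
finite degree `n`, then there is an orientation-preserving homeomorphism `h` of `[0,1]`
with `f = g ∘ h`. -/
theorem exists_oph_comp_of_same_degree (f g : I → I)
    (hfc : Continuous f) (hgc : Continuous g) (hfo : IsOpenMap f) (hgo : IsOpenMap g)
    (hf0 : f 0 = 0) (hg0 : g 0 = 0) (n : ℕ)
    (hfn : IsLeast {k : ℕ | DegWitness f k} n) (hgn : IsLeast {k : ℕ | DegWitness g k} n) :
    ∃ h : I ≃ₜ I, Monotone h ∧ ∀ x : I, f x = g (h x) := by
  obtain ⟨u, huS, hu0, hu1, hufval, hufdir⟩ := canonical f hfo hf0 n hfn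
  obtain ⟨v, hvS, hv0, hv1, hgval, hgdir⟩ := canonical g hgo hg0 n hgn
  have hn1 : 0 < n := by
    by_contra h
    have hn0 : n = 0 := by omega
    subst hn0
    have h01 : (0 : I) = 1 := by
      rw [← hu0, ← hu1]; exact congrArg u (Fin.ext (by simp))
    have : ((0 : I) : ℝ) = ((1 : I) : ℝ) := congrArg _ h01
    norm_num at this
  -- piecewise preimages via IVT
  have hexinv : ∀ (p : I → I) (w : Fin (n + 1) → I), Continuous p → StrictMono w →
      (∀ k : Fin (n + 1), p (w k) = if Even (k : ℕ) then 0 else 1) →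
      ∀ (j : Fin n) (t : I), ∃ x, x ∈ Set.Icc (w j.castSucc) (w j.succ) ∧ p x = t := by
    intro p w hpc hwS hpval j t
    have hpc' : IsPreconnected (Set.Icc (w j.castSucc) (w j.succ)) := isPreconnected_Icc_I _ _
    have hle : w j.castSucc ≤ w j.succ := (hwS Fin.castSucc_lt_succ).le
    have hm1 : w j.castSucc ∈ Set.Icc (w j.castSucc) (w j.succ) := ⟨le_refl _, hle⟩
    have hm2 : w j.succ ∈ Set.Icc (w j.castSucc) (w j.succ) := ⟨hle, le_refl _⟩
    have hcs : ((j.castSucc : Fin (n + 1)) : ℕ) = (j : ℕ) := rfl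
    have hsc : ((j.succ : Fin (n + 1)) : ℕ) = (j : ℕ) + 1 := rfl
    rcases Nat.even_or_odd (j : ℕ) with he | ho
    · have hv1' : p (w j.castSucc) = 0 := by rw [hpval]; simp [hcs, he]
      have hv2' : p (w j.succ) = 1 := by
        rw [hpval]; simp [hsc, Nat.even_add_one, he]
      have := IsPreconnected.intermediate_value hpc' hm1 hm2 hpc.continuousOn
      have ht : t ∈ Set.Icc (p (w j.castSucc)) (p (w j.succ)) := by
        rw [hv1', hv2']; exact ⟨nonneg', le_one'⟩
      obtain ⟨x, hx, hxt⟩ := this ht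
      exact ⟨x, hx, hxt⟩
    · have hjo : ¬ Even (j : ℕ) := by rw [Nat.even_iff]; have := Nat.odd_iff.mp ho; omega
      have hv1' : p (w j.castSucc) = 1 := by rw [hpval]; simp [hcs, hjo]
      have hv2' : p (w j.succ) = 0 := by
        rw [hpval]; simp [hsc, Nat.even_add_one, hjo]
      have := IsPreconnected.intermediate_value hpc' hm2 hm1 hpc.continuousOn
      have ht : t ∈ Set.Icc (p (w j.succ)) (p (w j.castSucc)) := by
        rw [hv1', hv2']; exact ⟨nonneg', le_one'⟩
      obtain ⟨x, hx, hxt⟩ := this ht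
      exact ⟨x, hx, hxt⟩
  choose wg hwgmem hwgval using hexinv g v hgc hvS hgval
  choose wf hwfmem hwfval using hexinv f u hfc huS hufval
  -- the index of the piece containing x (maximal one)
  have hexJ : ∀ (w : Fin (n + 1) → I), StrictMono w → w 0 = 0 → w (Fin.last n) = 1 →
      ∀ x : I, ∃ j : Fin n, w j.castSucc ≤ x ∧ x ≤ w j.succ ∧
        ∀ i : Fin n, w i.castSucc ≤ x → i ≤ j := by
    intro w hwS hw0 hw1 x
    have hne : (Finset.univ.filter fun j : Fin n => w j.castSucc ≤ x).Nonempty := by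
      refine ⟨⟨0, hn1⟩, ?_⟩
      simp only [Finset.mem_filter, Finset.mem_univ, true_and]
      have h00 : ((⟨0, hn1⟩ : Fin n).castSucc : Fin (n + 1)) = 0 := Fin.ext (by simp)
      rw [h00, hw0]; exact nonneg'
    set j := (Finset.univ.filter fun j : Fin n => w j.castSucc ≤ x).max' hne with hjdef
    have hjmem := Finset.max'_mem _ hne
    rw [Finset.mem_filter] at hjmem
    refine ⟨j, hjmem.2, ?_, fun i hi => Finset.le_max' _ i (by simp [hi])⟩
    by_contra hlt
    push_neg at hlt
    by_cases hj : (j : ℕ) + 1 < n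
    · have hle : w (⟨(j : ℕ) + 1, hj⟩ : Fin n).castSucc ≤ x := by
        have : ((⟨(j : ℕ) + 1, hj⟩ : Fin n).castSucc : Fin (n + 1)) = j.succ :=
          Fin.ext (by simp)
        rw [this]; exact hlt.le
      have := Finset.le_max' _ _ (Finset.mem_filter.2 ⟨Finset.mem_univ _, hle⟩ :
        (⟨(j : ℕ) + 1, hj⟩ : Fin n) ∈ Finset.univ.filter fun j : Fin n => w j.castSucc ≤ x)
      rw [← hjdef] at this
      have : (j : ℕ) + 1 ≤ (j : ℕ) := this
      omega
    · have hjs : (j.succ : Fin (n + 1)) = Fin.last n := Fin.ext (by simp [Fin.val_last]; omega)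
      rw [hjs, hw1] at hlt
      exact absurd le_one' (not_le.2 hlt)
  choose J hJ1 hJ2 hJ3 using hexJ u huS hu0 hu1
  choose J' hJ'1 hJ'2 hJ'3 using hexJ v hvS hv0 hv1
  set h0f : I → I := fun x => wg (J x) (f x) with hh0f
  have P1 : ∀ x, g (h0f x) = f x := fun x => (hwgval (J x) (f x))
  have P2 : ∀ x, h0f x ∈ Set.Icc (v (J x).castSucc) (v (J x).succ) :=
    fun x => (hwgmem (J x) (f x))
  have ginj : ∀ a : Fin n, Set.InjOn g (Set.Icc (v a.castSucc) (v a.succ)) := by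
    intro a
    rcases Nat.even_or_odd (a : ℕ) with he | ho
    · exact ((hgdir a).1 he).injOn
    · have hao : ¬ Even (a : ℕ) := by rw [Nat.even_iff]; have := Nat.odd_iff.mp ho; omega
      exact ((hgdir a).2 hao).injOn
  have hlt_of : ∀ a : Fin n, ∀ p ∈ Set.Icc (v a.castSucc) (v a.succ),
      ∀ q ∈ Set.Icc (v a.castSucc) (v a.succ),
      (Even (a : ℕ) → g p < g q) → (¬ Even (a : ℕ) → g q < g p) → p < q := by
    intro a p hp q hq h1 h2
    by_contra h
    push_neg at h
    rcases Nat.even_or_odd (a : ℕ) with he | ho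
    · exact absurd (h1 he) (not_lt.2 (((hgdir a).1 he).monotoneOn hq hp h))
    · have hao : ¬ Even (a : ℕ) := by rw [Nat.even_iff]; have := Nat.odd_iff.mp ho; omega
      exact absurd (h2 hao) (not_lt.2 (((hgdir a).2 hao).antitoneOn hq hp h))
  have hmonoI : StrictMono h0f := by
    intro x y hxy
    have hab : J x ≤ J y := hJ3 y (J x) (le_trans (hJ1 x) hxy.le)
    have hxm : x ∈ Set.Icc (u (J x).castSucc) (u (J x).succ) := ⟨hJ1 x, hJ2 x⟩
    rcases eq_or_lt_of_le hab with heq | hlt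
    · have hym : y ∈ Set.Icc (u (J x).castSucc) (u (J x).succ) := by
        rw [heq]; exact ⟨hJ1 y, hJ2 y⟩
      refine hlt_of (J x) _ (P2 x) _ (by rw [heq]; exact P2 y) ?_ ?_
      · intro he
        rw [P1, P1]
        exact (hufdir (J x)).1 he hxm hym hxy
      · intro ho
        rw [P1, P1]
        exact (hufdir (J x)).2 ho hxm hym hxy
    · have hxsucc : x < u (J x).succ := by
        rcases lt_or_eq_of_le (hJ2 x) with h | h
        · exact h
        · exfalso
          have hjval : ((J x) : ℕ) + 1 < n := by
            have := hlt
            have h1' : ((J x) : ℕ) < ((J y) : ℕ) := hlt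
            omega
          have hcs : ((⟨(J x : ℕ) + 1, hjval⟩ : Fin n).castSucc : Fin (n + 1)) = (J x).succ :=
            Fin.ext (by simp)
          have := hJ3 x ⟨(J x : ℕ) + 1, hjval⟩ (by rw [hcs, ← h])
          have : ((J x) : ℕ) + 1 ≤ ((J x) : ℕ) := this
          omega
      have hsuccmem : u (J x).succ ∈ Set.Icc (u (J x).castSucc) (u (J x).succ) :=
        ⟨(huS Fin.castSucc_lt_succ).le, le_refl _⟩
      have hvsmem : v (J x).succ ∈ Set.Icc (v (J x).castSucc) (v (J x).succ) :=
        ⟨(hvS Fin.castSucc_lt_succ).le, le_refl _⟩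
      have h1' : h0f x < v (J x).succ := by
        refine hlt_of (J x) _ (P2 x) _ hvsmem ?_ ?_
        · intro he
          rw [P1]
          calc f x < f (u (J x).succ) := (hufdir (J x)).1 he hxm hsuccmem hxsucc
            _ = g (v (J x).succ) := by rw [hufval, hgval]
        · intro ho
          rw [P1]
          calc g (v (J x).succ) = f (u (J x).succ) := by rw [hufval, hgval]
            _ < f x := (hufdir (J x)).2 ho hxm hsuccmem hxsucc
      have h2' : v (J x).succ ≤ v (J y).castSucc := by
        apply hvS.monotone
        have : ((J x) : ℕ) < ((J y) : ℕ) := hlt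
        exact Fin.le_def.2 (by simp only [Fin.val_succ, Fin.coe_castSucc]; omega)
      exact lt_of_lt_of_le h1' (le_trans h2' (P2 y).1)
  -- partition points map to partition points
  have hupoint : ∀ k : Fin (n + 1), h0f (u k) = v k := by
    intro k
    have hk1 : (J (u k)).castSucc ≤ k := (huS.le_iff_le).1 (hJ1 (u k))
    have hk2 : k ≤ (J (u k)).succ := (huS.le_iff_le).1 (hJ2 (u k))
    have hvk : v k ∈ Set.Icc (v (J (u k)).castSucc) (v (J (u k)).succ) :=
      ⟨hvS.monotone hk1, hvS.monotone hk2⟩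
    apply ginj (J (u k)) (P2 (u k)) hvk
    rw [P1, hufval k, hgval k]
  have hsurj : Function.Surjective h0f := by
    intro y
    rcases eq_or_lt_of_le (hJ'1 y) with h | hcslt
    · exact ⟨u (J' y).castSucc, (hupoint (J' y).castSucc).trans h⟩
    rcases eq_or_lt_of_le (hJ'2 y) with h | hsuclt
    · exact ⟨u (J' y).succ, (hupoint (J' y).succ).trans h.symm⟩
    set b := J' y
    set x := wf b (g y) with hxdef
    have hxmem := hwfmem b (g y)
    have hxval := hwfval b (g y)
    have hymem : y ∈ Set.Icc (v b.castSucc) (v b.succ) := ⟨(hJ'1 y), (hJ'2 y)⟩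
    have hgy1 : g y ≠ g (v b.castSucc) := by
      intro heq
      have hmm : v b.castSucc ∈ Set.Icc (v b.castSucc) (v b.succ) :=
        ⟨le_refl _, (hvS Fin.castSucc_lt_succ).le⟩
      exact absurd (ginj b hymem hmm heq) (ne_of_gt hcslt)
    have hgy2 : g y ≠ g (v b.succ) := by
      intro heq
      have hmm : v b.succ ∈ Set.Icc (v b.castSucc) (v b.succ) :=
        ⟨(hvS Fin.castSucc_lt_succ).le, le_refl _⟩
      exact absurd (ginj b hymem hmm heq) (ne_of_lt hsuclt)
    have hne0 : u b.castSucc < x := by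
      rcases lt_or_eq_of_le hxmem.1 with h | h
      · exact h
      · exfalso
        apply hgy1
        rw [← hxval, ← h, hufval, hgval]
    have hne1 : x < u b.succ := by
      rcases lt_or_eq_of_le hxmem.2 with h | h
      · exact h
      · exfalso
        apply hgy2
        rw [← hxval, h, hufval, hgval]
    have hJx : J x = b := by
      have hge : b ≤ J x := hJ3 x b hne0.le
      rcases eq_or_lt_of_le hge with h | h
      · exact h.symm
      · exfalso
        have hsle : (b.succ : Fin (n + 1)) ≤ (J x).castSucc := by
          have : (b : ℕ) < ((J x) : ℕ) := h
          exact Fin.le_def.2 (by simp only [Fin.val_succ, Fin.coe_castSucc]; omega)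
        have : u b.succ ≤ x := le_trans (huS.monotone hsle) (hJ1 x)
        exact absurd hne1 (not_lt.2 this)
    refine ⟨x, ?_⟩
    apply ginj b _ hymem
    · rw [P1, hxval]
    · rw [← hJx]; exact P2 x
  let iso := StrictMono.orderIsoOfSurjective h0f hmonoI hsurj
  refine ⟨iso.toHomeomorph, ?_, ?_⟩
  · intro a b hab
    have : iso.toHomeomorph a ≤ iso.toHomeomorph b := by
      simp only [OrderIso.coe_toHomeomorph]
      exact iso.monotone hab
    exact this
  · intro x
    have hcoe : (iso.toHomeomorph : I → I) x = h0f x := by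
      simp only [OrderIso.coe_toHomeomorph]
      rw [show (iso : I → I) = h0f from StrictMono.coe_orderIsoOfSurjective _ _ _]
    rw [hcoe, P1]

end
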